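/- arXiv:2301.03525 — 5 statements merged into one kernel-verified Lean document; each statement's English description precedes it below -/
import Mathlib

section
/- Let L > 0 and let x : [0,L] → ℝ³ be a C³ curve parametrized by arc length (|x'(s)| = 1 for all s) with x''(s) ≠ 0 for all s. Set t = x', κ(s) = |t'(s)|, n = t'/κ, b = t × n, and let τ : [0,L] → ℝ be the torsion, defined by τ(s) = b'(s)·n(s). Suppose {t, d₁, d₂} is a positively oriented (d₂ = t × d₁) orthonormal moving frame of class C¹ along x satisfying d₁' = −u₂ t and d₂' = u₁ t for continuous functions u₁, u₂ : [0,L] → ℝ (so that t' = u₂ d₁ − u₁ d₂). Then there exists θ ∈ C¹([0,L]) such that θ' = τ, u₁ = κ sin θ and u₂ = κ cos θ on [0,L]; in particular √(u₁² + u₂²) = κ. -/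
open scoped RealInnerProductSpace

/-- The cross product on `ℝ³ = EuclideanSpace ℝ (Fin 3)`. -/
noncomputable def cross3 (u v : EuclideanSpace ℝ (Fin 3)) : EuclideanSpace ℝ (Fin 3) :=
  WithLp.toLp 2 ![u 1 * v 2 - u 2 * v 1, u 2 * v 0 - u 0 * v 2, u 0 * v 1 - u 1 * v 0]

lemma inner3 (u v : EuclideanSpace ℝ (Fin 3)) :
    ⟪u, v⟫ = u 0 * v 0 + u 1 * v 1 + u 2 * v 2 := by
  simp [PiLp.inner_apply, Fin.sum_univ_three, RCLike.inner_apply, mul_comm]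

lemma cross3_apply0 (u v : EuclideanSpace ℝ (Fin 3)) :
    cross3 u v 0 = u 1 * v 2 - u 2 * v 1 := rfl
lemma cross3_apply1 (u v : EuclideanSpace ℝ (Fin 3)) :
    cross3 u v 1 = u 2 * v 0 - u 0 * v 2 := rfl
lemma cross3_apply2 (u v : EuclideanSpace ℝ (Fin 3)) :
    cross3 u v 2 = u 0 * v 1 - u 1 * v 0 := rfl

lemma inner_cross3_left (u v : EuclideanSpace ℝ (Fin 3)) : ⟪cross3 u v, u⟫ = 0 := by
  simp only [inner3, cross3_apply0, cross3_apply1, cross3_apply2]; ring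

lemma inner_cross3_right (u v : EuclideanSpace ℝ (Fin 3)) : ⟪cross3 u v, v⟫ = 0 := by
  simp only [inner3, cross3_apply0, cross3_apply1, cross3_apply2]; ring

lemma inner_cross3_self (u v : EuclideanSpace ℝ (Fin 3)) :
    ⟪cross3 u v, cross3 u v⟫ = ⟪u,u⟫ * ⟪v,v⟫ - ⟪u,v⟫ ^ 2 := by
  simp only [inner3, cross3_apply0, cross3_apply1, cross3_apply2]; ring

lemma cross3_smul_right (u : EuclideanSpace ℝ (Fin 3)) (c : ℝ) (v : EuclideanSpace ℝ (Fin 3)) :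
    cross3 u (c • v) = c • cross3 u v := by
  ext i
  fin_cases i <;>
    simp [cross3_apply0, cross3_apply1, cross3_apply2, PiLp.smul_apply, smul_eq_mul] <;> ring

lemma cross3_sub_right (u v w : EuclideanSpace ℝ (Fin 3)) :
    cross3 u (v - w) = cross3 u v - cross3 u w := by
  ext i
  fin_cases i <;>
    simp [cross3_apply0, cross3_apply1, cross3_apply2, PiLp.sub_apply] <;> ring

lemma cross3_cross3 (u v : EuclideanSpace ℝ (Fin 3)) :
    cross3 u (cross3 u v) = ⟪u,v⟫ • u - ⟪u,u⟫ • v := by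
  ext i
  fin_cases i <;>
    simp [cross3, inner3, Fin.sum_univ_three, PiLp.sub_apply, PiLp.smul_apply, smul_eq_mul,
      EuclideanSpace.norm_sq_eq, Real.norm_eq_abs, sq_abs] <;> ring

lemma decomp3 (v₀ v₁ v₂ : EuclideanSpace ℝ (Fin 3)) (h : Orthonormal ℝ ![v₀, v₁, v₂])
    (w : EuclideanSpace ℝ (Fin 3)) :
    w = ⟪w, v₀⟫ • v₀ + ⟪w, v₁⟫ • v₁ + ⟪w, v₂⟫ • v₂ := by
  have card : Fintype.card (Fin 3) = Module.finrank ℝ (EuclideanSpace ℝ (Fin 3)) := by simp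
  let B0 := basisOfLinearIndependentOfCardEqFinrank h.linearIndependent card
  have hB0 : ⇑B0 = ![v₀, v₁, v₂] := coe_basisOfLinearIndependentOfCardEqFinrank _ _
  have hOB : Orthonormal ℝ B0 := by rwa [hB0]
  let B := B0.toOrthonormalBasis hOB
  have hB : ∀ i, B i = ![v₀, v₁, v₂] i := by
    intro i; rw [Module.Basis.coe_toOrthonormalBasis, hB0]
  have := B.sum_repr' w
  rw [Fin.sum_univ_three, hB 0, hB 1, hB 2] at this
  simp only [Matrix.cons_val_zero, Matrix.cons_val_one, Matrix.head_cons,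
    Matrix.cons_val_two, Matrix.tail_cons] at this
  simpa [real_inner_comm, mul_comm] using this.symm

lemma contDiffOn_proj3 {f : ℝ → EuclideanSpace ℝ (Fin 3)} {s : Set ℝ} {m : WithTop ℕ∞}
    (hf : ContDiffOn ℝ m f s) (j : Fin 3) : ContDiffOn ℝ m (fun r => f r j) s := by
  have h := (EuclideanSpace.proj j : EuclideanSpace ℝ (Fin 3) →L[ℝ] ℝ).contDiff.comp_contDiffOn
    (f := f) hf
  exact h.congr fun r _ => rfl

/-- For a unit-speed `C³` curve `x` on `[0,L]` with nonvanishing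
second derivative, with Serret–Frenet data `κ = |t'|`, `n = t'/κ`, `b = t × n`,
`τ = b'·n`, and a positively-oriented `C¹` RPAF `{t, d₁, d₂}` with flexural
densities `u₁, u₂`, there is a `C¹` angle `θ` with `θ' = τ`, `u₁ = κ sin θ`,
`u₂ = κ cos θ`; in particular `√(u₁² + u₂²) = κ`. -/
theorem rpaf_serret_frenet_angle
    (L : ℝ) (hL : 0 < L)
    (x t n b t' b' : ℝ → EuclideanSpace ℝ (Fin 3)) (κ τ : ℝ → ℝ)
    (d₁ d₂ : ℝ → EuclideanSpace ℝ (Fin 3)) (u₁ u₂ : ℝ → ℝ)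
    (hx : ContDiffOn ℝ 3 x (Set.Icc 0 L))
    (hxt : ∀ s ∈ Set.Icc (0:ℝ) L, HasDerivWithinAt x (t s) (Set.Icc 0 L) s)
    (hunit : ∀ s ∈ Set.Icc (0:ℝ) L, ‖t s‖ = 1)
    (htder : ∀ s ∈ Set.Icc (0:ℝ) L, HasDerivWithinAt t (t' s) (Set.Icc 0 L) s)
    (ht'ne : ∀ s ∈ Set.Icc (0:ℝ) L, t' s ≠ 0)
    (hκ : ∀ s ∈ Set.Icc (0:ℝ) L, κ s = ‖t' s‖)
    (hn : ∀ s ∈ Set.Icc (0:ℝ) L, n s = (κ s)⁻¹ • t' s)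
    (hb : ∀ s ∈ Set.Icc (0:ℝ) L, b s = cross3 (t s) (n s))
    (hbder : ∀ s ∈ Set.Icc (0:ℝ) L, HasDerivWithinAt b (b' s) (Set.Icc 0 L) s)
    (hτ : ∀ s ∈ Set.Icc (0:ℝ) L, τ s = ⟪b' s, n s⟫)
    (hd₁C1 : ContDiffOn ℝ 1 d₁ (Set.Icc 0 L))
    (hd₂C1 : ContDiffOn ℝ 1 d₂ (Set.Icc 0 L))
    (horth : ∀ s ∈ Set.Icc (0:ℝ) L, Orthonormal ℝ ![t s, d₁ s, d₂ s])
    (horient : ∀ s ∈ Set.Icc (0:ℝ) L, d₂ s = cross3 (t s) (d₁ s))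
    (hu₁c : ContinuousOn u₁ (Set.Icc 0 L))
    (hu₂c : ContinuousOn u₂ (Set.Icc 0 L))
    (hd₁der : ∀ s ∈ Set.Icc (0:ℝ) L, HasDerivWithinAt d₁ (-(u₂ s) • t s) (Set.Icc 0 L) s)
    (hd₂der : ∀ s ∈ Set.Icc (0:ℝ) L, HasDerivWithinAt d₂ (u₁ s • t s) (Set.Icc 0 L) s)
    (hteq : ∀ s ∈ Set.Icc (0:ℝ) L, t' s = u₂ s • d₁ s - u₁ s • d₂ s) :
    ∃ θ : ℝ → ℝ, ContDiffOn ℝ 1 θ (Set.Icc 0 L) ∧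
      (∀ s ∈ Set.Icc (0:ℝ) L, HasDerivWithinAt θ (τ s) (Set.Icc 0 L) s) ∧
      (∀ s ∈ Set.Icc (0:ℝ) L,
        u₁ s = κ s * Real.sin (θ s) ∧ u₂ s = κ s * Real.cos (θ s) ∧
        Real.sqrt (u₁ s ^ 2 + u₂ s ^ 2) = κ s) := by
  have uD : UniqueDiffOn ℝ (Set.Icc (0:ℝ) L) := uniqueDiffOn_Icc hL
  have hIP : ∀ s ∈ Set.Icc (0:ℝ) L, ∀ i j : Fin 3,
      ⟪(![t s, d₁ s, d₂ s]) i, (![t s, d₁ s, d₂ s]) j⟫ = if i = j then 1 else 0 :=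
    fun s hs => orthonormal_iff_ite.mp (horth s hs)
  have htt : ∀ s ∈ Set.Icc (0:ℝ) L, ⟪t s, t s⟫ = 1 := fun s hs => by
    simpa using hIP s hs 0 0
  have hdd1 : ∀ s ∈ Set.Icc (0:ℝ) L, ⟪d₁ s, d₁ s⟫ = 1 := fun s hs => by
    simpa using hIP s hs 1 1
  have hdd2 : ∀ s ∈ Set.Icc (0:ℝ) L, ⟪d₂ s, d₂ s⟫ = 1 := fun s hs => by
    simpa using hIP s hs 2 2
  have htd1 : ∀ s ∈ Set.Icc (0:ℝ) L, ⟪t s, d₁ s⟫ = 0 := fun s hs => by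
    simpa using hIP s hs 0 1
  have htd2 : ∀ s ∈ Set.Icc (0:ℝ) L, ⟪t s, d₂ s⟫ = 0 := fun s hs => by
    simpa using hIP s hs 0 2
  have hd12 : ∀ s ∈ Set.Icc (0:ℝ) L, ⟪d₁ s, d₂ s⟫ = 0 := fun s hs => by
    simpa using hIP s hs 1 2
  -- κ positive
  have hκpos : ∀ s ∈ Set.Icc (0:ℝ) L, 0 < κ s := fun s hs => by
    rw [hκ s hs]; exact norm_pos_iff.mpr (ht'ne s hs)
  have hκne : ∀ s ∈ Set.Icc (0:ℝ) L, κ s ≠ 0 := fun s hs => (hκpos s hs).ne'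
  -- inner products with t'
  have ht'd1 : ∀ s ∈ Set.Icc (0:ℝ) L, ⟪t' s, d₁ s⟫ = u₂ s := fun s hs => by
    rw [hteq s hs, inner_sub_left, real_inner_smul_left, real_inner_smul_left,
      hdd1 s hs, real_inner_comm (d₁ s) (d₂ s), hd12 s hs]; ring
  have ht'd2 : ∀ s ∈ Set.Icc (0:ℝ) L, ⟪t' s, d₂ s⟫ = -u₁ s := fun s hs => by
    rw [hteq s hs, inner_sub_left, real_inner_smul_left, real_inner_smul_left,
      hdd2 s hs, hd12 s hs]; ring
  have ht't : ∀ s ∈ Set.Icc (0:ℝ) L, ⟪t' s, t s⟫ = 0 := fun s hs => by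
    rw [hteq s hs, inner_sub_left, real_inner_smul_left, real_inner_smul_left,
      real_inner_comm (t s) (d₁ s), real_inner_comm (t s) (d₂ s), htd1 s hs, htd2 s hs]; ring
  have ht't' : ∀ s ∈ Set.Icc (0:ℝ) L, ⟪t' s, t' s⟫ = u₁ s ^ 2 + u₂ s ^ 2 := fun s hs => by
    nth_rewrite 2 [hteq s hs]
    rw [inner_sub_right, real_inner_smul_right, real_inner_smul_right,
      ht'd1 s hs, ht'd2 s hs]; ring
  have hκsq : ∀ s ∈ Set.Icc (0:ℝ) L, κ s ^ 2 = u₁ s ^ 2 + u₂ s ^ 2 := fun s hs => by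
    rw [hκ s hs, ← real_inner_self_eq_norm_sq, ht't' s hs]
  -- b in the d-frame
  have hbframe : ∀ s ∈ Set.Icc (0:ℝ) L,
      b s = (κ s)⁻¹ • (u₁ s • d₁ s + u₂ s • d₂ s) := by
    intro s hs
    have hc2 : cross3 (t s) (d₂ s) = -d₁ s := by
      rw [horient s hs, cross3_cross3, htd1 s hs, htt s hs]
      simp
    rw [hb s hs, hn s hs, cross3_smul_right, hteq s hs, cross3_sub_right,
      cross3_smul_right, cross3_smul_right, ← horient s hs, hc2]
    rw [smul_neg, sub_neg_eq_add, add_comm]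
  have hbd1 : ∀ s ∈ Set.Icc (0:ℝ) L, ⟪b s, d₁ s⟫ = (κ s)⁻¹ * u₁ s := fun s hs => by
    rw [hbframe s hs, real_inner_smul_left, inner_add_left, real_inner_smul_left,
      real_inner_smul_left, hdd1 s hs, real_inner_comm (d₁ s) (d₂ s), hd12 s hs]; ring
  have hbd2 : ∀ s ∈ Set.Icc (0:ℝ) L, ⟪b s, d₂ s⟫ = (κ s)⁻¹ * u₂ s := fun s hs => by
    rw [hbframe s hs, real_inner_smul_left, inner_add_left, real_inner_smul_left,
      real_inner_smul_left, hdd2 s hs, hd12 s hs]; ring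
  have hnd1 : ∀ s ∈ Set.Icc (0:ℝ) L, ⟪n s, d₁ s⟫ = (κ s)⁻¹ * u₂ s := fun s hs => by
    rw [hn s hs, real_inner_smul_left, ht'd1 s hs]
  have hnd2 : ∀ s ∈ Set.Icc (0:ℝ) L, ⟪n s, d₂ s⟫ = -((κ s)⁻¹ * u₁ s) := fun s hs => by
    rw [hn s hs, real_inner_smul_left, ht'd2 s hs]; ring
  have hnn : ∀ s ∈ Set.Icc (0:ℝ) L, ⟪n s, n s⟫ = 1 := fun s hs => by
    rw [hn s hs, real_inner_smul_left, real_inner_smul_right, ht't' s hs, ← hκsq s hs,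
      pow_two]
    field_simp [hκne s hs]
  have hnt : ∀ s ∈ Set.Icc (0:ℝ) L, ⟪n s, t s⟫ = 0 := fun s hs => by
    rw [hn s hs, real_inner_smul_left, ht't s hs, mul_zero]
  have hbt : ∀ s ∈ Set.Icc (0:ℝ) L, ⟪b s, t s⟫ = 0 := fun s hs => by
    rw [hb s hs, inner_cross3_left]
  have hbn : ∀ s ∈ Set.Icc (0:ℝ) L, ⟪b s, n s⟫ = 0 := fun s hs => by
    rw [hb s hs, inner_cross3_right]
  have hbb : ∀ s ∈ Set.Icc (0:ℝ) L, ⟪b s, b s⟫ = 1 := fun s hs => by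
    rw [hb s hs, inner_cross3_self, htt s hs, hnn s hs,
      real_inner_comm (n s) (t s), hnt s hs]
    ring
  have hbt' : ∀ s ∈ Set.Icc (0:ℝ) L, ⟪b s, t' s⟫ = 0 := fun s hs => by
    rw [hteq s hs, inner_sub_right, real_inner_smul_right, real_inner_smul_right,
      hbd1 s hs, hbd2 s hs]; ring
  -- orthonormality of the Frenet frame
  have hFrenet : ∀ s ∈ Set.Icc (0:ℝ) L, Orthonormal ℝ ![t s, n s, b s] := by
    intro s hs
    have h01 : ⟪t s, n s⟫ = 0 := (real_inner_comm (n s) (t s)).trans (hnt s hs)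
    have h02 : ⟪t s, b s⟫ = 0 := (real_inner_comm (b s) (t s)).trans (hbt s hs)
    have h12 : ⟪n s, b s⟫ = 0 := (real_inner_comm (b s) (n s)).trans (hbn s hs)
    have hnN : ‖n s‖ = 1 := by
      have := hnn s hs; rw [real_inner_self_eq_norm_sq] at this
      exact (pow_eq_one_iff_of_nonneg (norm_nonneg _) two_ne_zero).mp this
    have hbN : ‖b s‖ = 1 := by
      have := hbb s hs; rw [real_inner_self_eq_norm_sq] at this
      exact (pow_eq_one_iff_of_nonneg (norm_nonneg _) two_ne_zero).mp this
    rw [orthonormal_iff_ite]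
    intro i j
    fin_cases i <;> fin_cases j <;>
      simp [hunit s hs, hnN, hbN, htt s hs, hnn s hs, hbb s hs, hnt s hs, hbt s hs, hbn s hs, h01, h02, h12]
  -- derivative orthogonality of b'
  have hb'b : ∀ s ∈ Set.Icc (0:ℝ) L, ⟪b' s, b s⟫ = 0 := by
    intro s hs
    have h1 : HasDerivWithinAt (fun r => ⟪b r, b r⟫) (⟪b s, b' s⟫ + ⟪b' s, b s⟫)
        (Set.Icc 0 L) s := (hbder s hs).inner ℝ (hbder s hs)
    have h2 : HasDerivWithinAt (fun r => ⟪b r, b r⟫) 0 (Set.Icc 0 L) s :=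
      (hasDerivWithinAt_const s _ (1:ℝ)).congr (fun r hr => hbb r hr) (hbb s hs)
    have h3 := UniqueDiffWithinAt.eq_deriv _ (uD s hs) h1 h2
    rw [real_inner_comm (b' s) (b s)] at h3
    linarith
  have hb't : ∀ s ∈ Set.Icc (0:ℝ) L, ⟪b' s, t s⟫ = 0 := by
    intro s hs
    have h1 : HasDerivWithinAt (fun r => ⟪b r, t r⟫) (⟪b s, t' s⟫ + ⟪b' s, t s⟫)
        (Set.Icc 0 L) s := (hbder s hs).inner ℝ (htder s hs)
    have h2 : HasDerivWithinAt (fun r => ⟪b r, t r⟫) 0 (Set.Icc 0 L) s :=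
      (hasDerivWithinAt_const s _ (0:ℝ)).congr (fun r hr => hbt r hr) (hbt s hs)
    have h3 := UniqueDiffWithinAt.eq_deriv _ (uD s hs) h1 h2
    rw [hbt' s hs] at h3
    linarith
  -- b' = τ • n
  have hb'eq : ∀ s ∈ Set.Icc (0:ℝ) L, b' s = τ s • n s := by
    intro s hs
    have hd := decomp3 (t s) (n s) (b s) (hFrenet s hs) (b' s)
    rw [hb't s hs, hb'b s hs, ← hτ s hs] at hd
    simpa using hd
  have hb'd1 : ∀ s ∈ Set.Icc (0:ℝ) L, ⟪b' s, d₁ s⟫ = τ s * ((κ s)⁻¹ * u₂ s) := fun s hs => by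
    rw [hb'eq s hs, real_inner_smul_left, hnd1 s hs]
  have hb'd2 : ∀ s ∈ Set.Icc (0:ℝ) L, ⟪b' s, d₂ s⟫ = -(τ s * ((κ s)⁻¹ * u₁ s)) := fun s hs => by
    rw [hb'eq s hs, real_inner_smul_left, hnd2 s hs]; ring
  have h0mem : (0:ℝ) ∈ Set.Icc (0:ℝ) L := Set.left_mem_Icc.mpr hL.le
  -- regularity chain
  have hteqd : ∀ s ∈ Set.Icc (0:ℝ) L, t s = derivWithin x (Set.Icc 0 L) s :=
    fun s hs => ((hxt s hs).derivWithin (uD s hs)).symm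
  have htC2 : ContDiffOn ℝ 2 t (Set.Icc 0 L) :=
    (hx.derivWithin uD (by norm_num)).congr hteqd
  have ht'eqd : ∀ s ∈ Set.Icc (0:ℝ) L, t' s = derivWithin t (Set.Icc 0 L) s :=
    fun s hs => ((htder s hs).derivWithin (uD s hs)).symm
  have ht'C1 : ContDiffOn ℝ 1 t' (Set.Icc 0 L) :=
    (htC2.derivWithin uD (by norm_num)).congr ht'eqd
  have hκC1 : ContDiffOn ℝ 1 κ (Set.Icc 0 L) := (ht'C1.norm ℝ ht'ne).congr hκ
  have hnC1 : ContDiffOn ℝ 1 n (Set.Icc 0 L) :=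
    ((hκC1.inv hκne).smul ht'C1).congr hn
  have hbC1 : ContDiffOn ℝ 1 b (Set.Icc 0 L) := by
    have hcr : ContDiffOn ℝ 1 (fun s => cross3 (t s) (n s)) (Set.Icc 0 L) := by
      rw [contDiffOn_euclidean]
      intro i
      have ht_i : ∀ j : Fin 3, ContDiffOn ℝ 1 (fun s => t s j) (Set.Icc 0 L) := fun j =>
        contDiffOn_proj3 (htC2.of_le (by norm_num)) j
      have hn_i : ∀ j : Fin 3, ContDiffOn ℝ 1 (fun s => n s j) (Set.Icc 0 L) := fun j =>
        contDiffOn_proj3 hnC1 j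
      fin_cases i <;>
        · simp only [Fin.reduceFinMk, Fin.zero_eta, Fin.mk_one, cross3_apply0, cross3_apply1, cross3_apply2]
          exact ((ht_i _).mul (hn_i _)).sub ((ht_i _).mul (hn_i _))
    exact hcr.congr hb
  have hb'eqd : ∀ s ∈ Set.Icc (0:ℝ) L, b' s = derivWithin b (Set.Icc 0 L) s :=
    fun s hs => ((hbder s hs).derivWithin (uD s hs)).symm
  have hb'cont : ContinuousOn b' (Set.Icc 0 L) :=
    (hbC1.continuousOn_derivWithin uD le_rfl).congr hb'eqd
  have hτcont : ContinuousOn τ (Set.Icc 0 L) :=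
    (hb'cont.inner hnC1.continuousOn).congr hτ
  -- initial angle
  have hpq0 : ((κ 0)⁻¹ * u₂ 0) ^ 2 + ((κ 0)⁻¹ * u₁ 0) ^ 2 = 1 := by
    have h1 := hκsq 0 h0mem
    have h2 := hκne 0 h0mem
    field_simp
    linarith
  set z : ℂ := ⟨(κ 0)⁻¹ * u₂ 0, (κ 0)⁻¹ * u₁ 0⟩ with hz
  have hzabs : ‖z‖ = 1 := by
    rw [Complex.norm_def, hz, Complex.normSq_mk,
      show (κ 0)⁻¹ * u₂ 0 * ((κ 0)⁻¹ * u₂ 0) + (κ 0)⁻¹ * u₁ 0 * ((κ 0)⁻¹ * u₁ 0) = 1 by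
        nlinarith [hpq0]]
    exact Real.sqrt_one
  have hzne : z ≠ 0 := by
    intro h; rw [h] at hzabs; simp at hzabs
  have hcos0 : Real.cos (Complex.arg z) = (κ 0)⁻¹ * u₂ 0 := by
    rw [Complex.cos_arg hzne, hzabs, hz]; simp
  have hsin0 : Real.sin (Complex.arg z) = (κ 0)⁻¹ * u₁ 0 := by
    rw [Complex.sin_arg, hzabs, hz]; simp
  -- construction of θ
  set proj : ℝ → ℝ := fun r => max 0 (min r L) with hproj
  have hprojcont : Continuous proj := continuous_const.max (continuous_id.min continuous_const)
  have hprojmem : ∀ r, proj r ∈ Set.Icc (0:ℝ) L := fun r =>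
    ⟨le_max_left _ _, max_le hL.le (min_le_right _ _)⟩
  have hprojid : ∀ s ∈ Set.Icc (0:ℝ) L, proj s = s := fun s hs => by
    rw [hproj]; simp only; rw [min_eq_left hs.2, max_eq_right hs.1]
  set τe : ℝ → ℝ := fun r => τ (proj r) with hτe
  have hτecont : Continuous τe := hτcont.comp_continuous hprojcont hprojmem
  have hτes : ∀ s ∈ Set.Icc (0:ℝ) L, τe s = τ s := fun s hs => by
    rw [hτe]; simp only; rw [hprojid s hs]
  set θ : ℝ → ℝ := fun r => Complex.arg z + ∫ u in (0:ℝ)..r, τe u with hθdef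
  have hθder : ∀ s, HasDerivAt θ (τe s) s := fun s =>
    ((hτecont.integral_hasStrictDerivAt 0 s).hasDerivAt).const_add (Complex.arg z)
  have hθderW : ∀ s ∈ Set.Icc (0:ℝ) L, HasDerivWithinAt θ (τ s) (Set.Icc 0 L) s := fun s hs => by
    rw [← hτes s hs]; exact (hθder s).hasDerivWithinAt
  have hθ0 : θ 0 = Complex.arg z := by
    rw [hθdef]; simp
  have hθC1 : ContDiffOn ℝ 1 θ (Set.Icc 0 L) := by
    rw [show (1 : WithTop ℕ∞) = 0 + 1 by norm_num, contDiffOn_succ_iff_derivWithin uD]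
    refine ⟨fun s hs => ((hθder s).hasDerivWithinAt).differentiableWithinAt,
      fun h => by simp at h, ?_⟩
    rw [contDiffOn_zero]
    exact hτcont.congr fun s hs => (hθderW s hs).derivWithin (uD s hs)
  -- the auxiliary function g
  set g : ℝ → ℝ := fun r => Real.sin (θ r) * ⟪b r, d₁ r⟫ + Real.cos (θ r) * ⟪b r, d₂ r⟫ with hgdef
  have hgder : ∀ s ∈ Set.Icc (0:ℝ) L, HasDerivWithinAt g 0 (Set.Icc 0 L) s := by
    intro s hs
    have h1 := ((hθderW s hs).sin.mul ((hbder s hs).inner ℝ (hd₁der s hs))).add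
      ((hθderW s hs).cos.mul ((hbder s hs).inner ℝ (hd₂der s hs)))
    refine h1.congr_deriv ?_
    rw [real_inner_smul_right, real_inner_smul_right, hbt s hs, hbd1 s hs, hbd2 s hs,
      hb'd1 s hs, hb'd2 s hs]
    ring
  have hgconst : ∀ s ∈ Set.Icc (0:ℝ) L, g s = g 0 := by
    intro s hs
    have hb1 := (convex_Icc (0:ℝ) L).norm_image_sub_le_of_norm_hasDerivWithin_le
      (f' := fun _ => (0:ℝ)) (C := 0) (fun r hr => hgder r hr) (fun r hr => by simp) h0mem hs
    simp only [zero_mul, Real.norm_eq_abs] at hb1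
    have := abs_nonneg (g s - g 0)
    have h2 : |g s - g 0| = 0 := le_antisymm hb1 this
    have := abs_eq_zero.mp h2
    linarith [this]
  have hg0 : g 0 = 1 := by
    rw [hgdef]; simp only
    rw [hθ0, hbd1 0 h0mem, hbd2 0 h0mem, hcos0, hsin0]
    nlinarith [hpq0]
  -- conclusion
  refine ⟨θ, hθC1, hθderW, ?_⟩
  intro s hs
  have hgs : Real.sin (θ s) * ((κ s)⁻¹ * u₁ s) + Real.cos (θ s) * ((κ s)⁻¹ * u₂ s) = 1 := by
    have hh := (hgconst s hs).trans hg0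
    rw [hgdef] at hh; simp only at hh
    rw [hbd1 s hs, hbd2 s hs] at hh
    exact hh
  have hpqs : ((κ s)⁻¹ * u₁ s) ^ 2 + ((κ s)⁻¹ * u₂ s) ^ 2 = 1 := by
    have h1 := hκsq s hs
    have h2 := hκne s hs
    field_simp
    linarith
  have hS := Real.sin_sq_add_cos_sq (θ s)
  have hzero : (Real.sin (θ s) - (κ s)⁻¹ * u₁ s) ^ 2
      + (Real.cos (θ s) - (κ s)⁻¹ * u₂ s) ^ 2 = 0 := by
    linear_combination hS + hpqs - 2 * hgs
  have hsin : Real.sin (θ s) = (κ s)⁻¹ * u₁ s := by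
    have h1 : (Real.sin (θ s) - (κ s)⁻¹ * u₁ s) ^ 2 = 0 :=
      le_antisymm (by nlinarith [sq_nonneg (Real.cos (θ s) - (κ s)⁻¹ * u₂ s)]) (sq_nonneg _)
    exact sub_eq_zero.mp ((pow_eq_zero_iff two_ne_zero).mp h1)
  have hcos : Real.cos (θ s) = (κ s)⁻¹ * u₂ s := by
    have h1 : (Real.cos (θ s) - (κ s)⁻¹ * u₂ s) ^ 2 = 0 :=
      le_antisymm (by nlinarith [sq_nonneg (Real.sin (θ s) - (κ s)⁻¹ * u₁ s)]) (sq_nonneg _)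
    exact sub_eq_zero.mp ((pow_eq_zero_iff two_ne_zero).mp h1)
  refine ⟨?_, ?_, ?_⟩
  · rw [hsin]; field_simp [hκne s hs]
  · rw [hcos]; field_simp [hκne s hs]
  · rw [← hκsq s hs, Real.sqrt_sq (hκpos s hs).le]
end

section
/- Let L > 0 and let t : [0,L] → ℝ³ be differentiable with |t(s)| = 1 for all s. Let {t, d₁, d₂} and {t, d̃₁, d̃₂} be two differentiable orthonormal moving frames along [0,L], each having d₁', d₂' (respectively d̃₁', d̃₂') pointwise parallel to t. Suppose θ : [0,L] → ℝ is differentiable and d̃₁ = cos θ · d₁ − sin θ · d₂, d̃₂ = sin θ · d₁ + cos θ · d₂ on [0,L]. Then θ'(s) = 0 for all s ∈ [0,L], i.e. θ is constant. -/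
open scoped RealInnerProductSpace

/-- If two relatively parallel adapted frames along the same unit
tangent field are related by a differentiable rotation angle `θ`, then `θ' = 0`
on `[0,L]`, i.e. `θ` is constant. -/
theorem rpaf_rotation_angle_constant
    (L : ℝ) (hL : 0 < L)
    (t d₁ d₂ e₁ e₂ d₁' d₂' e₁' e₂' : ℝ → EuclideanSpace ℝ (Fin 3)) (θ θ' : ℝ → ℝ)
    (htdiff : ∀ s ∈ Set.Icc (0:ℝ) L, DifferentiableWithinAt ℝ t (Set.Icc 0 L) s)
    (hunit : ∀ s ∈ Set.Icc (0:ℝ) L, ‖t s‖ = 1)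
    (horth : ∀ s ∈ Set.Icc (0:ℝ) L, Orthonormal ℝ ![t s, d₁ s, d₂ s])
    (horth' : ∀ s ∈ Set.Icc (0:ℝ) L, Orthonormal ℝ ![t s, e₁ s, e₂ s])
    (hd₁der : ∀ s ∈ Set.Icc (0:ℝ) L, HasDerivWithinAt d₁ (d₁' s) (Set.Icc 0 L) s)
    (hd₂der : ∀ s ∈ Set.Icc (0:ℝ) L, HasDerivWithinAt d₂ (d₂' s) (Set.Icc 0 L) s)
    (he₁der : ∀ s ∈ Set.Icc (0:ℝ) L, HasDerivWithinAt e₁ (e₁' s) (Set.Icc 0 L) s)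
    (he₂der : ∀ s ∈ Set.Icc (0:ℝ) L, HasDerivWithinAt e₂ (e₂' s) (Set.Icc 0 L) s)
    (hpard₁ : ∀ s ∈ Set.Icc (0:ℝ) L, ∃ c : ℝ, d₁' s = c • t s)
    (hpard₂ : ∀ s ∈ Set.Icc (0:ℝ) L, ∃ c : ℝ, d₂' s = c • t s)
    (hpare₁ : ∀ s ∈ Set.Icc (0:ℝ) L, ∃ c : ℝ, e₁' s = c • t s)
    (hpare₂ : ∀ s ∈ Set.Icc (0:ℝ) L, ∃ c : ℝ, e₂' s = c • t s)
    (hθder : ∀ s ∈ Set.Icc (0:ℝ) L, HasDerivWithinAt θ (θ' s) (Set.Icc 0 L) s)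
    (hrot₁ : ∀ s ∈ Set.Icc (0:ℝ) L,
      e₁ s = Real.cos (θ s) • d₁ s - Real.sin (θ s) • d₂ s)
    (hrot₂ : ∀ s ∈ Set.Icc (0:ℝ) L,
      e₂ s = Real.sin (θ s) • d₁ s + Real.cos (θ s) • d₂ s) :
    ∀ s ∈ Set.Icc (0:ℝ) L, θ' s = 0 := by
  intro s hs
  have hu : UniqueDiffWithinAt ℝ (Set.Icc (0:ℝ) L) s := uniqueDiffOn_Icc hL s hs
  -- derivative of cos∘θ and sin∘θ
  have hcos : HasDerivWithinAt (fun u => Real.cos (θ u))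
      (-Real.sin (θ s) * θ' s) (Set.Icc 0 L) s :=
    (Real.hasDerivAt_cos (θ s)).comp_hasDerivWithinAt s (hθder s hs)
  have hsin : HasDerivWithinAt (fun u => Real.sin (θ u))
      (Real.cos (θ s) * θ' s) (Set.Icc 0 L) s :=
    (Real.hasDerivAt_sin (θ s)).comp_hasDerivWithinAt s (hθder s hs)
  set v : EuclideanSpace ℝ (Fin 3) :=
    (Real.cos (θ s) • d₁' s + (-Real.sin (θ s) * θ' s) • d₁ s) -
    (Real.sin (θ s) • d₂' s + (Real.cos (θ s) * θ' s) • d₂ s) with hv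
  have hfder : HasDerivWithinAt
      (fun u => Real.cos (θ u) • d₁ u - Real.sin (θ u) • d₂ u) v (Set.Icc 0 L) s :=
    (hcos.smul (hd₁der s hs)).sub (hsin.smul (hd₂der s hs))
  have he₁alt : HasDerivWithinAt e₁ v (Set.Icc 0 L) s :=
    hfder.congr (fun u hu => hrot₁ u hu) (hrot₁ s hs)
  have heq : e₁' s = v := by
    rw [← (he₁der s hs).derivWithin hu, ← he₁alt.derivWithin hu]
  -- orthonormality facts
  have ho := (orthonormal_iff_ite (𝕜 := ℝ)).mp (horth s hs)
  have ho' := (orthonormal_iff_ite (𝕜 := ℝ)).mp (horth' s hs)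
  have itd₁ : ⟪t s, d₁ s⟫ = 0 := by simpa using ho 0 1
  have itd₂ : ⟪t s, d₂ s⟫ = 0 := by simpa using ho 0 2
  have id₁d₂ : ⟪d₁ s, d₂ s⟫ = 0 := by simpa using ho 1 2
  have id₂d₁ : ⟪d₂ s, d₁ s⟫ = 0 := by simpa using ho 2 1
  have id₁ : ⟪d₁ s, d₁ s⟫ = 1 := by simpa using ho 1 1
  have id₂ : ⟪d₂ s, d₂ s⟫ = 1 := by simpa using ho 2 2
  have ite₂ : ⟪t s, e₂ s⟫ = 0 := by simpa using ho' 0 2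
  obtain ⟨c₁, hc₁⟩ := hpard₁ s hs
  obtain ⟨c₂, hc₂⟩ := hpard₂ s hs
  obtain ⟨ce, hce⟩ := hpare₁ s hs
  -- left side zero
  have hzero : ⟪e₁' s, e₂ s⟫ = 0 := by
    rw [hce, real_inner_smul_left, ite₂]; ring
  have hexp : ⟪e₁' s, e₂ s⟫ = -θ' s := by
    rw [heq, hv, hrot₂ s hs, hc₁, hc₂]
    simp only [inner_sub_left, inner_add_left, inner_add_right, real_inner_smul_left,
      real_inner_smul_right, itd₁, itd₂, id₁d₂, id₂d₁, id₁, id₂]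
    have h := Real.sin_sq_add_cos_sq (θ s)
    linear_combination (-θ' s) * h
  have := hzero.symm.trans hexp
  linarith
end

section
/- Let L > 0 and let t : [0,L] → ℝ³ be differentiable with |t(s)| = 1 for all s. Let {t, d₁, d₂} and {t, d̃₁, d̃₂} be two differentiable orthonormal moving frames along [0,L], each having its two normal fields' derivatives pointwise parallel to t. Then for each pair i, j ∈ {1,2}, the function s ↦ d̃ᵢ(s)·dⱼ(s) is constant on [0,L]. Consequently the two frames differ by a rotation of the normal plane that does not depend on s. -/
open scoped RealInnerProductSpace

/-- A vector orthogonal to `t` expands in the orthonormal frame `{t, d₁, d₂}`. -/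
lemma rpaf_expand (t d₁ d₂ v : EuclideanSpace ℝ (Fin 3))
    (h : Orthonormal ℝ ![t, d₁, d₂]) (hvt : ⟪v, t⟫ = 0) :
    v = ⟪v, d₁⟫ • d₁ + ⟪v, d₂⟫ • d₂ := by
  have hspan : Submodule.span ℝ (Set.range ![t, d₁, d₂]) = ⊤ :=
    h.linearIndependent.span_eq_top_of_card_eq_finrank (by simp)
  set w : EuclideanSpace ℝ (Fin 3) := v - (⟪v, d₁⟫ • d₁ + ⟪v, d₂⟫ • d₂) with hw
  have h01 : ⟪t, d₁⟫ = 0 := by simpa using h.2 (i := 0) (j := 1) (by decide)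
  have h02 : ⟪t, d₂⟫ = 0 := by simpa using h.2 (i := 0) (j := 2) (by decide)
  have h12 : ⟪d₁, d₂⟫ = 0 := by simpa using h.2 (i := 1) (j := 2) (by decide)
  have h1 : ⟪d₁, d₁⟫ = 1 := by
    have := h.1 1; rw [@norm_eq_sqrt_re_inner ℝ] at this
    simp at this; rw [real_inner_self_eq_norm_sq, this]; norm_num
  have h2 : ⟪d₂, d₂⟫ = 1 := by
    have := h.1 2; rw [@norm_eq_sqrt_re_inner ℝ] at this
    simp at this; rw [real_inner_self_eq_norm_sq, this]; norm_num
  have hwt : ⟪w, t⟫ = 0 := by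
    simp [hw, inner_sub_left, inner_add_left, inner_smul_left, hvt,
      real_inner_comm t d₁ ▸ h01, real_inner_comm t d₂ ▸ h02]
  have hwd₁ : ⟪w, d₁⟫ = 0 := by
    simp [hw, inner_sub_left, inner_add_left, inner_smul_left, h1,
      real_inner_comm d₁ d₂ ▸ h12]
    rw [← real_inner_self_eq_norm_sq, h1]; ring
  have hwd₂ : ⟪w, d₂⟫ = 0 := by
    simp [hw, inner_sub_left, inner_add_left, inner_smul_left, h2, h12]
    rw [← real_inner_self_eq_norm_sq, h2]; ring
  have hall : ∀ u ∈ Submodule.span ℝ (Set.range ![t, d₁, d₂]), ⟪w, u⟫ = 0 := by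
    intro u hu
    induction hu using Submodule.span_induction with
    | mem u hu =>
        obtain ⟨i, rfl⟩ := hu
        fin_cases i
        · simpa using hwt
        · simpa using hwd₁
        · simpa using hwd₂
    | zero => simp
    | add u v _ _ hu hv => simp [inner_add_right, hu, hv]
    | smul c u _ hu => simp [inner_smul_right, hu]
  have hw0 : w = 0 := by
    have := hall w (by rw [hspan]; trivial)
    exact inner_self_eq_zero.mp this
  have := sub_eq_zero.mp hw0
  linear_combination (norm := module) this

/-- Constancy of an inner product whose derivative vanishes on `[0, L]`. -/
lemma rpaf_const (L : ℝ) (f g f' g' : ℝ → EuclideanSpace ℝ (Fin 3))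
    (hf : ∀ s ∈ Set.Icc (0:ℝ) L, HasDerivWithinAt f (f' s) (Set.Icc 0 L) s)
    (hg : ∀ s ∈ Set.Icc (0:ℝ) L, HasDerivWithinAt g (g' s) (Set.Icc 0 L) s)
    (hz : ∀ s ∈ Set.Icc (0:ℝ) L, ⟪f s, g' s⟫ + ⟪f' s, g s⟫ = 0)
    {s₁ s₂ : ℝ} (h₁ : s₁ ∈ Set.Icc (0:ℝ) L) (h₂ : s₂ ∈ Set.Icc (0:ℝ) L) :
    ⟪f s₁, g s₁⟫ = ⟪f s₂, g s₂⟫ := by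
  rcases le_or_gt L 0 with hL | hL
  · have : s₁ = s₂ := by
      have := h₁.1; have := h₁.2; have := h₂.1; have := h₂.2; linarith
    rw [this]
  have hder : ∀ s ∈ Set.Icc (0:ℝ) L,
      HasDerivWithinAt (fun u => ⟪f u, g u⟫) 0 (Set.Icc 0 L) s := by
    intro s hs
    have := ((hf s hs).inner ℝ (hg s hs))
    rwa [hz s hs] at this
  have hconv : Convex ℝ (Set.Icc (0:ℝ) L) := convex_Icc 0 L
  have hdiff : DifferentiableOn ℝ (fun u => ⟪f u, g u⟫) (Set.Icc 0 L) :=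
    fun s hs => (hder s hs).differentiableWithinAt
  refine hconv.is_const_of_fderivWithin_eq_zero hdiff ?_ h₁ h₂
  intro s hs
  have := (hder s hs).hasFDerivWithinAt.fderivWithin (uniqueDiffOn_Icc hL s hs)
  rw [this]; ext x; simp

/-- Two relatively parallel adapted frames along the same unit tangent
field have constant mutual inner products; consequently they differ by an
`s`-independent rotation of the normal plane. -/
theorem rpaf_frames_differ_by_constant_rotation
    (L : ℝ) (hL : 0 < L)
    (t d₁ d₂ e₁ e₂ d₁' d₂' e₁' e₂' : ℝ → EuclideanSpace ℝ (Fin 3))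
    (htdiff : ∀ s ∈ Set.Icc (0:ℝ) L, DifferentiableWithinAt ℝ t (Set.Icc 0 L) s)
    (hunit : ∀ s ∈ Set.Icc (0:ℝ) L, ‖t s‖ = 1)
    (horth : ∀ s ∈ Set.Icc (0:ℝ) L, Orthonormal ℝ ![t s, d₁ s, d₂ s])
    (horth' : ∀ s ∈ Set.Icc (0:ℝ) L, Orthonormal ℝ ![t s, e₁ s, e₂ s])
    (hd₁der : ∀ s ∈ Set.Icc (0:ℝ) L, HasDerivWithinAt d₁ (d₁' s) (Set.Icc 0 L) s)
    (hd₂der : ∀ s ∈ Set.Icc (0:ℝ) L, HasDerivWithinAt d₂ (d₂' s) (Set.Icc 0 L) s)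
    (he₁der : ∀ s ∈ Set.Icc (0:ℝ) L, HasDerivWithinAt e₁ (e₁' s) (Set.Icc 0 L) s)
    (he₂der : ∀ s ∈ Set.Icc (0:ℝ) L, HasDerivWithinAt e₂ (e₂' s) (Set.Icc 0 L) s)
    (hpard₁ : ∀ s ∈ Set.Icc (0:ℝ) L, ∃ c : ℝ, d₁' s = c • t s)
    (hpard₂ : ∀ s ∈ Set.Icc (0:ℝ) L, ∃ c : ℝ, d₂' s = c • t s)
    (hpare₁ : ∀ s ∈ Set.Icc (0:ℝ) L, ∃ c : ℝ, e₁' s = c • t s)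
    (hpare₂ : ∀ s ∈ Set.Icc (0:ℝ) L, ∃ c : ℝ, e₂' s = c • t s) :
    (∀ s₁ ∈ Set.Icc (0:ℝ) L, ∀ s₂ ∈ Set.Icc (0:ℝ) L,
      ⟪e₁ s₁, d₁ s₁⟫ = ⟪e₁ s₂, d₁ s₂⟫ ∧ ⟪e₁ s₁, d₂ s₁⟫ = ⟪e₁ s₂, d₂ s₂⟫ ∧
      ⟪e₂ s₁, d₁ s₁⟫ = ⟪e₂ s₂, d₁ s₂⟫ ∧ ⟪e₂ s₁, d₂ s₁⟫ = ⟪e₂ s₂, d₂ s₂⟫) ∧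
    ∃ A B Γ Δ : ℝ, ∀ s ∈ Set.Icc (0:ℝ) L,
      e₁ s = A • d₁ s + B • d₂ s ∧ e₂ s = Γ • d₁ s + Δ • d₂ s := by
  -- orthogonality facts
  have htd₁ : ∀ s ∈ Set.Icc (0:ℝ) L, ⟪t s, d₁ s⟫ = 0 := fun s hs => by
    simpa using (horth s hs).2 (i := 0) (j := 1) (by decide)
  have htd₂ : ∀ s ∈ Set.Icc (0:ℝ) L, ⟪t s, d₂ s⟫ = 0 := fun s hs => by
    simpa using (horth s hs).2 (i := 0) (j := 2) (by decide)
  have he₁t : ∀ s ∈ Set.Icc (0:ℝ) L, ⟪e₁ s, t s⟫ = 0 := fun s hs => by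
    simpa using (horth' s hs).2 (i := 1) (j := 0) (by decide)
  have he₂t : ∀ s ∈ Set.Icc (0:ℝ) L, ⟪e₂ s, t s⟫ = 0 := fun s hs => by
    simpa using (horth' s hs).2 (i := 2) (j := 0) (by decide)
  -- derivative of each mutual inner product vanishes
  have key : ∀ (e e' d d' : ℝ → EuclideanSpace ℝ (Fin 3)),
      (∀ s ∈ Set.Icc (0:ℝ) L, ∃ c : ℝ, e' s = c • t s) →
      (∀ s ∈ Set.Icc (0:ℝ) L, ∃ c : ℝ, d' s = c • t s) →
      (∀ s ∈ Set.Icc (0:ℝ) L, ⟪e s, t s⟫ = 0) →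
      (∀ s ∈ Set.Icc (0:ℝ) L, ⟪t s, d s⟫ = 0) →
      ∀ s ∈ Set.Icc (0:ℝ) L, ⟪e s, d' s⟫ + ⟪e' s, d s⟫ = 0 := by
    intro e e' d d' hpe hpd het htd s hs
    obtain ⟨c, hc⟩ := hpe s hs
    obtain ⟨c', hc'⟩ := hpd s hs
    rw [hc, hc', inner_smul_right, inner_smul_left, het s hs, htd s hs]
    simp
  have c11 := fun {s₁ s₂} h₁ h₂ => rpaf_const L e₁ d₁ e₁' d₁' he₁der hd₁der
    (key e₁ e₁' d₁ d₁' hpare₁ hpard₁ he₁t htd₁) (s₁ := s₁) (s₂ := s₂) h₁ h₂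
  have c12 := fun {s₁ s₂} h₁ h₂ => rpaf_const L e₁ d₂ e₁' d₂' he₁der hd₂der
    (key e₁ e₁' d₂ d₂' hpare₁ hpard₂ he₁t htd₂) (s₁ := s₁) (s₂ := s₂) h₁ h₂
  have c21 := fun {s₁ s₂} h₁ h₂ => rpaf_const L e₂ d₁ e₂' d₁' he₂der hd₁der
    (key e₂ e₂' d₁ d₁' hpare₂ hpard₁ he₂t htd₁) (s₁ := s₁) (s₂ := s₂) h₁ h₂
  have c22 := fun {s₁ s₂} h₁ h₂ => rpaf_const L e₂ d₂ e₂' d₂' he₂der hd₂der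
    (key e₂ e₂' d₂ d₂' hpare₂ hpard₂ he₂t htd₂) (s₁ := s₁) (s₂ := s₂) h₁ h₂
  have h0 : (0:ℝ) ∈ Set.Icc (0:ℝ) L := ⟨le_refl 0, le_of_lt hL⟩
  refine ⟨fun s₁ h₁ s₂ h₂ => ⟨c11 h₁ h₂, c12 h₁ h₂, c21 h₁ h₂, c22 h₁ h₂⟩,
    ⟪e₁ 0, d₁ 0⟫, ⟪e₁ 0, d₂ 0⟫, ⟪e₂ 0, d₁ 0⟫, ⟪e₂ 0, d₂ 0⟫, fun s hs => ?_⟩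
  constructor
  · have := rpaf_expand (t s) (d₁ s) (d₂ s) (e₁ s) (horth s hs) (he₁t s hs)
    rwa [c11 hs h0, c12 hs h0] at this
  · have := rpaf_expand (t s) (d₁ s) (d₂ s) (e₂ s) (horth s hs) (he₂t s hs)
    rwa [c21 hs h0, c22 hs h0] at this
end

section
/- Let L > 0, let t : [0,L] → ℝ³ be differentiable with continuous derivative and |t(s)| = 1 for all s, and let d₁⁰, d₂⁰ ∈ ℝ³ be such that {t(0), d₁⁰, d₂⁰} is an orthonormal set. Suppose u₁, u₂ : [0,L] → ℝ are continuous and satisfy u₁(s) = −d₂⁰·t'(s) − ∫₀ˢ u₁(r) (t(r)·t'(s)) dr and u₂(s) = d₁⁰·t'(s) − ∫₀ˢ u₂(r) (t(r)·t'(s)) dr, and define d₁(s) = d₁⁰ − ∫₀ˢ u₂(r) t(r) dr and d₂(s) = d₂⁰ + ∫₀ˢ u₁(r) t(r) dr. Then {t(s), d₁(s), d₂(s)} is an orthonormal set for every s ∈ [0,L], and the frame satisfies t' = u₂ d₁ − u₁ d₂, d₁' = −u₂ t, d₂' = u₁ t on [0,L], i.e. it is a relatively parallel adapted frame with initial data t(0),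 d₁⁰, d₂⁰. -/
open scoped RealInnerProductSpace

lemma ftc_aux {E : Type*} [NormedAddCommGroup E] [NormedSpace ℝ E] [CompleteSpace E]
    {L : ℝ} {g : ℝ → E} (hg : ContinuousOn g (Set.Icc 0 L)) {s : ℝ}
    (hs : s ∈ Set.Icc (0:ℝ) L) :
    HasDerivWithinAt (fun x => ∫ r in (0:ℝ)..x, g r) (g s) (Set.Icc 0 L) s := by
  haveI : Fact (s ∈ Set.Icc (0:ℝ) L) := ⟨hs⟩
  exact intervalIntegral.integral_hasDerivWithinAt_right
    ((hg.mono (by rw [Set.uIcc_of_le hs.1]; exact Set.Icc_subset_Icc_right hs.2)).intervalIntegrable)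
    (hg.stronglyMeasurableAtFilter_nhdsWithin measurableSet_Icc s)
    (hg s hs)

lemma const_aux {L : ℝ} {f : ℝ → ℝ} (hf : ContinuousOn f (Set.Icc 0 L))
    (hd : ∀ s ∈ Set.Icc (0:ℝ) L, HasDerivWithinAt f 0 (Set.Icc 0 L) s) :
    ∀ s ∈ Set.Icc (0:ℝ) L, f s = f 0 := by
  apply constant_of_has_deriv_right_zero hf
  intro x hx
  exact (hd x (Set.Ico_subset_Icc_self hx)).mono_of_mem_nhdsWithin (Icc_mem_nhdsGE_of_mem hx)

/-- If `u₁, u₂` solve the Volterra integral equations and `d₁, d₂` are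
defined by the corresponding integrals, then `{t, d₁, d₂}` is an orthonormal moving
frame satisfying `t' = u₂ d₁ − u₁ d₂`, `d₁' = −u₂ t`, `d₂' = u₁ t`, i.e. it is a
relatively parallel adapted frame with initial data `t(0), a₁, a₂`. -/
theorem volterra_gives_rpaf
    (L : ℝ) (hL : 0 < L)
    (t t' d₁ d₂ : ℝ → EuclideanSpace ℝ (Fin 3)) (a₁ a₂ : EuclideanSpace ℝ (Fin 3))
    (u₁ u₂ : ℝ → ℝ)
    (htder : ∀ s ∈ Set.Icc (0:ℝ) L, HasDerivWithinAt t (t' s) (Set.Icc 0 L) s)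
    (ht'cont : ContinuousOn t' (Set.Icc 0 L))
    (hunit : ∀ s ∈ Set.Icc (0:ℝ) L, ‖t s‖ = 1)
    (h0 : Orthonormal ℝ ![t 0, a₁, a₂])
    (hu₁cont : ContinuousOn u₁ (Set.Icc 0 L))
    (hu₂cont : ContinuousOn u₂ (Set.Icc 0 L))
    (hV₁ : ∀ s ∈ Set.Icc (0:ℝ) L,
      u₁ s = -⟪a₂, t' s⟫ - ∫ r in (0:ℝ)..s, u₁ r * ⟪t r, t' s⟫)
    (hV₂ : ∀ s ∈ Set.Icc (0:ℝ) L,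
      u₂ s = ⟪a₁, t' s⟫ - ∫ r in (0:ℝ)..s, u₂ r * ⟪t r, t' s⟫)
    (hd₁ : ∀ s ∈ Set.Icc (0:ℝ) L, d₁ s = a₁ - ∫ r in (0:ℝ)..s, u₂ r • t r)
    (hd₂ : ∀ s ∈ Set.Icc (0:ℝ) L, d₂ s = a₂ + ∫ r in (0:ℝ)..s, u₁ r • t r) :
    ∀ s ∈ Set.Icc (0:ℝ) L,
      Orthonormal ℝ ![t s, d₁ s, d₂ s] ∧
      t' s = u₂ s • d₁ s - u₁ s • d₂ s ∧
      HasDerivWithinAt d₁ (-(u₂ s) • t s) (Set.Icc 0 L) s ∧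
      HasDerivWithinAt d₂ (u₁ s • t s) (Set.Icc 0 L) s ∧
      d₁ 0 = a₁ ∧ d₂ 0 = a₂ := by
  have htcont : ContinuousOn t (Set.Icc 0 L) := fun s hs => (htder s hs).continuousWithinAt
  have hg₁ : ContinuousOn (fun r => u₁ r • t r) (Set.Icc 0 L) := hu₁cont.smul htcont
  have hg₂ : ContinuousOn (fun r => u₂ r • t r) (Set.Icc 0 L) := hu₂cont.smul htcont
  have h0L : (0:ℝ) ∈ Set.Icc (0:ℝ) L := ⟨le_refl 0, hL.le⟩
  have hd₁0 : d₁ 0 = a₁ := by rw [hd₁ 0 h0L]; simp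
  have hd₂0 : d₂ 0 = a₂ := by rw [hd₂ 0 h0L]; simp
  -- derivatives of d₁, d₂ within the interval
  have hd₁der : ∀ s ∈ Set.Icc (0:ℝ) L,
      HasDerivWithinAt d₁ (-(u₂ s) • t s) (Set.Icc 0 L) s := by
    intro s hs
    have h : HasDerivWithinAt (fun x => a₁ - ∫ r in (0:ℝ)..x, u₂ r • t r)
        (-(u₂ s) • t s) (Set.Icc 0 L) s := by
      simpa [neg_smul] using (ftc_aux hg₂ hs).const_sub a₁
    exact h.congr (fun x hx => hd₁ x hx) (hd₁ s hs)
  have hd₂der : ∀ s ∈ Set.Icc (0:ℝ) L,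
      HasDerivWithinAt d₂ (u₁ s • t s) (Set.Icc 0 L) s := by
    intro s hs
    exact ((ftc_aux hg₁ hs).const_add a₂).congr (fun x hx => hd₂ x hx) (hd₂ s hs)
  -- inner product commutes with the interval integral
  have hiswap : ∀ (v : EuclideanSpace ℝ (Fin 3)) (w : ℝ → ℝ),
      ContinuousOn w (Set.Icc 0 L) → ∀ s ∈ Set.Icc (0:ℝ) L,
      ⟪∫ r in (0:ℝ)..s, w r • t r, v⟫ = ∫ r in (0:ℝ)..s, w r * ⟪t r, v⟫ := by
    intro v w hw s hs
    have hint : IntervalIntegrable (fun r => w r • t r) MeasureTheory.volume 0 s :=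
      ((hw.smul htcont).mono
        (by rw [Set.uIcc_of_le hs.1]; exact Set.Icc_subset_Icc_right hs.2)).intervalIntegrable
    have heq : ∀ r, (innerSL ℝ v) (w r • t r) = w r * ⟪t r, v⟫ := by
      intro r; rw [innerSL_apply_apply, real_inner_smul_right, real_inner_comm]
    rw [real_inner_comm, ← innerSL_apply_apply (𝕜 := ℝ), ← (innerSL ℝ v).intervalIntegral_comp_comm hint]
    simp_rw [heq]
  -- the Volterra equations identify u₁, u₂ with inner products
  have hkd₁ : ∀ s ∈ Set.Icc (0:ℝ) L, ⟪d₁ s, t' s⟫ = u₂ s := by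
    intro s hs
    rw [hd₁ s hs, inner_sub_left, hiswap (t' s) u₂ hu₂cont s hs, hV₂ s hs]
  have hkd₂ : ∀ s ∈ Set.Icc (0:ℝ) L, ⟪d₂ s, t' s⟫ = -u₁ s := by
    intro s hs
    rw [hd₂ s hs, inner_add_left, hiswap (t' s) u₁ hu₁cont s hs, hV₁ s hs]
    ring
  have hkd₁c : ∀ s ∈ Set.Icc (0:ℝ) L, ⟪t' s, d₁ s⟫ = u₂ s := by
    intro s hs; rw [real_inner_comm]; exact hkd₁ s hs
  have hkd₂c : ∀ s ∈ Set.Icc (0:ℝ) L, ⟪t' s, d₂ s⟫ = -u₁ s := by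
    intro s hs; rw [real_inner_comm]; exact hkd₂ s hs
  -- basic facts about t
  have htt : ∀ s ∈ Set.Icc (0:ℝ) L, ⟪t s, t s⟫ = 1 := by
    intro s hs
    rw [real_inner_self_eq_norm_mul_norm, hunit s hs]; norm_num
  have hudiff := uniqueDiffOn_Icc hL
  have htt' : ∀ s ∈ Set.Icc (0:ℝ) L, ⟪t s, t' s⟫ = 0 := by
    intro s hs
    have h1 : HasDerivWithinAt (fun x => ⟪t x, t x⟫) (⟪t s, t' s⟫ + ⟪t' s, t s⟫)
        (Set.Icc 0 L) s := (htder s hs).inner ℝ (htder s hs)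
    have h2 : HasDerivWithinAt (fun x => ⟪t x, t x⟫) 0 (Set.Icc 0 L) s :=
      (hasDerivWithinAt_const s _ (1:ℝ)).congr (fun x hx => htt x hx) (htt s hs)
    have heq : ⟪t s, t' s⟫ + ⟪t' s, t s⟫ = 0 :=
      (h1.derivWithin (hudiff s hs)).symm.trans (h2.derivWithin (hudiff s hs))
    have hc : ⟪t s, t' s⟫ = ⟪t' s, t s⟫ := real_inner_comm _ _
    linarith
  -- initial orthonormality facts
  have h0ta₁ : ⟪t 0, a₁⟫ = 0 := by
    have := h0.2 (show (0:Fin 3) ≠ 1 by decide); simpa using this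
  have h0ta₂ : ⟪t 0, a₂⟫ = 0 := by
    have := h0.2 (show (0:Fin 3) ≠ 2 by decide); simpa using this
  have h0a₁a₂ : ⟪a₁, a₂⟫ = 0 := by
    have := h0.2 (show (1:Fin 3) ≠ 2 by decide); simpa using this
  have h0a₁ : ⟪a₁, a₁⟫ = 1 := by
    have := h0.1 1
    simp only [Matrix.cons_val_one, Matrix.head_cons, Matrix.cons_val_zero] at this
    rw [real_inner_self_eq_norm_mul_norm, this]; norm_num
  have h0a₂ : ⟪a₂, a₂⟫ = 1 := by
    have := h0.1 2
    simp only [Matrix.cons_val_two, Matrix.tail_cons, Matrix.head_cons] at this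
    rw [real_inner_self_eq_norm_mul_norm, this]; norm_num
  -- the Gram matrix entries are constant
  have hβ : ∀ s ∈ Set.Icc (0:ℝ) L, ⟪t s, d₁ s⟫ = 0 := by
    have hder : ∀ s ∈ Set.Icc (0:ℝ) L,
        HasDerivWithinAt (fun x => ⟪t x, d₁ x⟫) 0 (Set.Icc 0 L) s := by
      intro s hs
      have h := (htder s hs).inner ℝ (hd₁der s hs)
      have he : ⟪t s, -(u₂ s) • t s⟫ + ⟪t' s, d₁ s⟫ = 0 := by
        rw [real_inner_smul_right, htt s hs, hkd₁c s hs]; ring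
      rwa [he] at h
    have hcont : ContinuousOn (fun x => ⟪t x, d₁ x⟫) (Set.Icc 0 L) :=
      fun s hs => (hder s hs).continuousWithinAt
    intro s hs
    rw [const_aux hcont hder s hs, hd₁0, h0ta₁]
  have hγ : ∀ s ∈ Set.Icc (0:ℝ) L, ⟪t s, d₂ s⟫ = 0 := by
    have hder : ∀ s ∈ Set.Icc (0:ℝ) L,
        HasDerivWithinAt (fun x => ⟪t x, d₂ x⟫) 0 (Set.Icc 0 L) s := by
      intro s hs
      have h := (htder s hs).inner ℝ (hd₂der s hs)
      have he : ⟪t s, u₁ s • t s⟫ + ⟪t' s, d₂ s⟫ = 0 := by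
        rw [real_inner_smul_right, htt s hs, hkd₂c s hs]; ring
      rwa [he] at h
    have hcont : ContinuousOn (fun x => ⟪t x, d₂ x⟫) (Set.Icc 0 L) :=
      fun s hs => (hder s hs).continuousWithinAt
    intro s hs
    rw [const_aux hcont hder s hs, hd₂0, h0ta₂]
  have hβc : ∀ s ∈ Set.Icc (0:ℝ) L, ⟪d₁ s, t s⟫ = 0 := by
    intro s hs; rw [real_inner_comm]; exact hβ s hs
  have hγc : ∀ s ∈ Set.Icc (0:ℝ) L, ⟪d₂ s, t s⟫ = 0 := by
    intro s hs; rw [real_inner_comm]; exact hγ s hs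
  have hδ : ∀ s ∈ Set.Icc (0:ℝ) L, ⟪d₁ s, d₁ s⟫ = 1 := by
    have hder : ∀ s ∈ Set.Icc (0:ℝ) L,
        HasDerivWithinAt (fun x => ⟪d₁ x, d₁ x⟫) 0 (Set.Icc 0 L) s := by
      intro s hs
      have h := (hd₁der s hs).inner ℝ (hd₁der s hs)
      have he : ⟪d₁ s, -(u₂ s) • t s⟫ + ⟪-(u₂ s) • t s, d₁ s⟫ = 0 := by
        rw [real_inner_smul_right, real_inner_smul_left, hβc s hs, hβ s hs]; ring
      rwa [he] at h
    have hcont : ContinuousOn (fun x => ⟪d₁ x, d₁ x⟫) (Set.Icc 0 L) :=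
      fun s hs => (hder s hs).continuousWithinAt
    intro s hs
    rw [const_aux hcont hder s hs, hd₁0, h0a₁]
  have hε : ∀ s ∈ Set.Icc (0:ℝ) L, ⟪d₁ s, d₂ s⟫ = 0 := by
    have hder : ∀ s ∈ Set.Icc (0:ℝ) L,
        HasDerivWithinAt (fun x => ⟪d₁ x, d₂ x⟫) 0 (Set.Icc 0 L) s := by
      intro s hs
      have h := (hd₁der s hs).inner ℝ (hd₂der s hs)
      have he : ⟪d₁ s, u₁ s • t s⟫ + ⟪-(u₂ s) • t s, d₂ s⟫ = 0 := by
        rw [real_inner_smul_right, real_inner_smul_left, hβc s hs, hγ s hs]; ring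
      rwa [he] at h
    have hcont : ContinuousOn (fun x => ⟪d₁ x, d₂ x⟫) (Set.Icc 0 L) :=
      fun s hs => (hder s hs).continuousWithinAt
    intro s hs
    rw [const_aux hcont hder s hs, hd₁0, hd₂0, h0a₁a₂]
  have hζ : ∀ s ∈ Set.Icc (0:ℝ) L, ⟪d₂ s, d₂ s⟫ = 1 := by
    have hder : ∀ s ∈ Set.Icc (0:ℝ) L,
        HasDerivWithinAt (fun x => ⟪d₂ x, d₂ x⟫) 0 (Set.Icc 0 L) s := by
      intro s hs
      have h := (hd₂der s hs).inner ℝ (hd₂der s hs)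
      have he : ⟪d₂ s, u₁ s • t s⟫ + ⟪u₁ s • t s, d₂ s⟫ = 0 := by
        rw [real_inner_smul_right, real_inner_smul_left, hγc s hs, hγ s hs]; ring
      rwa [he] at h
    have hcont : ContinuousOn (fun x => ⟪d₂ x, d₂ x⟫) (Set.Icc 0 L) :=
      fun s hs => (hder s hs).continuousWithinAt
    intro s hs
    rw [const_aux hcont hder s hs, hd₂0, h0a₂]
  -- conclusion
  intro s hs
  have hβ' : ⟪d₁ s, t s⟫ = 0 := hβc s hs
  have hγ' : ⟪d₂ s, t s⟫ = 0 := hγc s hs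
  have hε' : ⟪d₂ s, d₁ s⟫ = 0 := by rw [real_inner_comm]; exact hε s hs
  have htt'c : ⟪t' s, t s⟫ = 0 := by rw [real_inner_comm]; exact htt' s hs
  have hkd₁' : ⟪t' s, d₁ s⟫ = u₂ s := hkd₁c s hs
  have hkd₂' : ⟪t' s, d₂ s⟫ = -u₁ s := hkd₂c s hs
  have hon : Orthonormal ℝ ![t s, d₁ s, d₂ s] := by
    rw [orthonormal_iff_ite]
    intro i j
    fin_cases i <;> fin_cases j <;>
      simp [htt s hs, hβ s hs, hγ s hs, hδ s hs, hε s hs, hζ s hs, hβ', hγ', hε'] <;>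
      rw [← mul_self_eq_one_iff, ← real_inner_self_eq_norm_mul_norm] <;> simp only [htt s hs, hδ s hs, hζ s hs]
  have htop : Submodule.span ℝ (Set.range ![t s, d₁ s, d₂ s]) = ⊤ :=
    hon.linearIndependent.span_eq_top_of_card_eq_finrank (by simp)
  have hw : t' s = u₂ s • d₁ s - u₁ s • d₂ s := by
    set w := t' s - (u₂ s • d₁ s - u₁ s • d₂ s) with hwdef
    have hwt : ⟪w, t s⟫ = 0 := by
      rw [hwdef, inner_sub_left, inner_sub_left, real_inner_smul_left, real_inner_smul_left,
        htt'c, hβ', hγ']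
      ring
    have hwd₁ : ⟪w, d₁ s⟫ = 0 := by
      rw [hwdef, inner_sub_left, inner_sub_left, real_inner_smul_left, real_inner_smul_left,
        hkd₁', hδ s hs, hε']
      ring
    have hwd₂ : ⟪w, d₂ s⟫ = 0 := by
      rw [hwdef, inner_sub_left, inner_sub_left, real_inner_smul_left, real_inner_smul_left,
        hkd₂', hε s hs, hζ s hs]
      ring
    have hperp : ∀ v ∈ Submodule.span ℝ (Set.range ![t s, d₁ s, d₂ s]), ⟪w, v⟫ = 0 := by
      intro v hv
      induction hv using Submodule.span_induction with
      | mem x hx =>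
        obtain ⟨i, rfl⟩ := hx
        fin_cases i
        · simpa using hwt
        · simpa using hwd₁
        · simpa using hwd₂
      | zero => simp
      | add x y hx hy ihx ihy => rw [inner_add_right, ihx, ihy, add_zero]
      | smul c x hx ih => rw [real_inner_smul_right, ih, mul_zero]
    have hww : ⟪w, w⟫ = 0 := hperp w (htop ▸ Submodule.mem_top)
    have hw0 : w = 0 := by rwa [inner_self_eq_zero] at hww
    rw [hwdef] at hw0
    exact sub_eq_zero.mp hw0
  exact ⟨hon, hw, hd₁der s hs, hd₂der s hs, hd₁0, hd₂0⟩
end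

section
/- Let L > 0, let u₁, u₂, u₃ : [0,L] → ℝ be continuous, and let t, d₁, d₂ : [0,L] → ℝ³ be differentiable maps satisfying the system t' = u₂ d₁ − u₁ d₂, d₁' = −u₂ t + u₃ d₂, d₂' = u₁ t − u₃ d₁ on [0,L]. If {t(0), d₁(0), d₂(0)} is an orthonormal set, then {t(s), d₁(s), d₂(s)} is an orthonormal set for every s ∈ [0,L]. -/
open scoped RealInnerProductSpace

private lemma four_term_bound (a b c d x y z w U N : ℝ)
    (ha : |a| ≤ U) (hb : |b| ≤ U) (hc : |c| ≤ U) (hd : |d| ≤ U)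
    (hx : |x| ≤ N) (hy : |y| ≤ N) (hz : |z| ≤ N) (hw : |w| ≤ N) :
    |a * x + b * y + c * z + d * w| ≤ 4 * U * N := by
  have hU : (0:ℝ) ≤ U := le_trans (abs_nonneg _) ha
  have h1 : |a * x| ≤ U * N := by rw [abs_mul]; exact mul_le_mul ha hx (abs_nonneg _) hU
  have h2 : |b * y| ≤ U * N := by rw [abs_mul]; exact mul_le_mul hb hy (abs_nonneg _) hU
  have h3 : |c * z| ≤ U * N := by rw [abs_mul]; exact mul_le_mul hc hz (abs_nonneg _) hU
  have h4 : |d * w| ≤ U * N := by rw [abs_mul]; exact mul_le_mul hd hw (abs_nonneg _) hU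
  calc |a * x + b * y + c * z + d * w|
      ≤ |a * x + b * y + c * z| + |d * w| := abs_add_le _ _
    _ ≤ |a * x + b * y| + |c * z| + |d * w| := by gcongr; exact abs_add_le _ _
    _ ≤ |a * x| + |b * y| + |c * z| + |d * w| := by gcongr; exact abs_add_le _ _
    _ ≤ 4 * U * N := by linarith


private noncomputable def mfF (t d₁ d₂ : ℝ → EuclideanSpace ℝ (Fin 3)) (s : ℝ) : Fin 6 → ℝ :=
  ![⟪t s, t s⟫ - 1, ⟪d₁ s, d₁ s⟫ - 1, ⟪d₂ s, d₂ s⟫ - 1,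
    ⟪t s, d₁ s⟫, ⟪t s, d₂ s⟫, ⟪d₁ s, d₂ s⟫]

private noncomputable def mfG (u₁ u₂ u₃ : ℝ → ℝ) (t d₁ d₂ : ℝ → EuclideanSpace ℝ (Fin 3))
    (s : ℝ) : Fin 6 → ℝ :=
  ![2 * u₂ s * ⟪t s, d₁ s⟫ - 2 * u₁ s * ⟪t s, d₂ s⟫,
    -(2 * u₂ s * ⟪t s, d₁ s⟫) + 2 * u₃ s * ⟪d₁ s, d₂ s⟫,
    2 * u₁ s * ⟪t s, d₂ s⟫ - 2 * u₃ s * ⟪d₁ s, d₂ s⟫,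
    u₂ s * (⟪d₁ s, d₁ s⟫ - 1) - u₂ s * (⟪t s, t s⟫ - 1)
      - u₁ s * ⟪d₁ s, d₂ s⟫ + u₃ s * ⟪t s, d₂ s⟫,
    u₁ s * (⟪t s, t s⟫ - 1) - u₁ s * (⟪d₂ s, d₂ s⟫ - 1)
      + u₂ s * ⟪d₁ s, d₂ s⟫ - u₃ s * ⟪t s, d₁ s⟫,
    u₃ s * (⟪d₂ s, d₂ s⟫ - 1) - u₃ s * (⟪d₁ s, d₁ s⟫ - 1)
      + u₁ s * ⟪t s, d₁ s⟫ - u₂ s * ⟪t s, d₂ s⟫]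

/-- If `t, d₁, d₂` satisfy the general moving-frame system
`t' = u₂ d₁ − u₁ d₂`, `d₁' = −u₂ t + u₃ d₂`, `d₂' = u₁ t − u₃ d₁` with continuous
coefficients and start from an orthonormal set, they remain orthonormal on `[0,L]`. -/
theorem moving_frame_system_preserves_orthonormality
    (L : ℝ) (hL : 0 < L)
    (t d₁ d₂ : ℝ → EuclideanSpace ℝ (Fin 3)) (u₁ u₂ u₃ : ℝ → ℝ)
    (hu₁ : ContinuousOn u₁ (Set.Icc 0 L))
    (hu₂ : ContinuousOn u₂ (Set.Icc 0 L))
    (hu₃ : ContinuousOn u₃ (Set.Icc 0 L))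
    (htder : ∀ s ∈ Set.Icc (0:ℝ) L,
      HasDerivWithinAt t (u₂ s • d₁ s - u₁ s • d₂ s) (Set.Icc 0 L) s)
    (hd₁der : ∀ s ∈ Set.Icc (0:ℝ) L,
      HasDerivWithinAt d₁ (-(u₂ s) • t s + u₃ s • d₂ s) (Set.Icc 0 L) s)
    (hd₂der : ∀ s ∈ Set.Icc (0:ℝ) L,
      HasDerivWithinAt d₂ (u₁ s • t s - u₃ s • d₁ s) (Set.Icc 0 L) s)
    (h0 : Orthonormal ℝ ![t 0, d₁ 0, d₂ 0]) :
    ∀ s ∈ Set.Icc (0:ℝ) L, Orthonormal ℝ ![t s, d₁ s, d₂ s] := by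
  -- (mfF t d₁ d₂) solves a linear ODE.
  have hF' : ∀ s ∈ Set.Icc (0:ℝ) L, HasDerivWithinAt (mfF t d₁ d₂) ((mfG u₁ u₂ u₃ t d₁ d₂) s) (Set.Icc 0 L) s := by
    intro s hs
    rw [hasDerivWithinAt_pi]
    intro i
    have ht := htder s hs
    have h1 := hd₁der s hs
    have h2 := hd₂der s hs
    have att := ((ht.inner ℝ ht).sub_const 1)
    have a11 := ((h1.inner ℝ h1).sub_const 1)
    have a22 := ((h2.inner ℝ h2).sub_const 1)
    have at1 := ht.inner ℝ h1
    have at2 := ht.inner ℝ h2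
    have a12 := h1.inner ℝ h2
    fin_cases i
    · show HasDerivWithinAt (fun x => ⟪t x, t x⟫ - 1)
        (2 * u₂ s * ⟪t s, d₁ s⟫ - 2 * u₁ s * ⟪t s, d₂ s⟫) (Set.Icc 0 L) s
      refine att.congr_deriv ?_
      simp only [inner_sub_left, inner_sub_right, real_inner_smul_left, real_inner_smul_right]
      rw [real_inner_comm (d₁ s) (t s), real_inner_comm (d₂ s) (t s)]
      ring
    · show HasDerivWithinAt (fun x => ⟪d₁ x, d₁ x⟫ - 1)
        (-(2 * u₂ s * ⟪t s, d₁ s⟫) + 2 * u₃ s * ⟪d₁ s, d₂ s⟫) (Set.Icc 0 L) s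
      refine a11.congr_deriv ?_
      simp only [inner_add_left, inner_add_right, real_inner_smul_left, real_inner_smul_right]
      rw [real_inner_comm (t s) (d₁ s), real_inner_comm (d₂ s) (d₁ s)]
      ring
    · show HasDerivWithinAt (fun x => ⟪d₂ x, d₂ x⟫ - 1)
        (2 * u₁ s * ⟪t s, d₂ s⟫ - 2 * u₃ s * ⟪d₁ s, d₂ s⟫) (Set.Icc 0 L) s
      refine a22.congr_deriv ?_
      simp only [inner_sub_left, inner_sub_right, real_inner_smul_left, real_inner_smul_right]
      rw [real_inner_comm (t s) (d₂ s), real_inner_comm (d₁ s) (d₂ s)]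
      ring
    · show HasDerivWithinAt (fun x => ⟪t x, d₁ x⟫)
        (u₂ s * (⟪d₁ s, d₁ s⟫ - 1) - u₂ s * (⟪t s, t s⟫ - 1)
          - u₁ s * ⟪d₁ s, d₂ s⟫ + u₃ s * ⟪t s, d₂ s⟫) (Set.Icc 0 L) s
      refine at1.congr_deriv ?_
      simp only [inner_add_left, inner_add_right, inner_sub_left, inner_sub_right,
        real_inner_smul_left, real_inner_smul_right]
      rw [real_inner_comm (d₂ s) (d₁ s)]
      ring
    · show HasDerivWithinAt (fun x => ⟪t x, d₂ x⟫)
        (u₁ s * (⟪t s, t s⟫ - 1) - u₁ s * (⟪d₂ s, d₂ s⟫ - 1)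
          + u₂ s * ⟪d₁ s, d₂ s⟫ - u₃ s * ⟪t s, d₁ s⟫) (Set.Icc 0 L) s
      refine at2.congr_deriv ?_
      simp only [inner_add_left, inner_add_right, inner_sub_left, inner_sub_right,
        real_inner_smul_left, real_inner_smul_right]
      ring
    · show HasDerivWithinAt (fun x => ⟪d₁ x, d₂ x⟫)
        (u₃ s * (⟪d₂ s, d₂ s⟫ - 1) - u₃ s * (⟪d₁ s, d₁ s⟫ - 1)
          + u₁ s * ⟪t s, d₁ s⟫ - u₂ s * ⟪t s, d₂ s⟫) (Set.Icc 0 L) s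
      refine a12.congr_deriv ?_
      simp only [inner_add_left, inner_add_right, inner_sub_left, inner_sub_right,
        real_inner_smul_left, real_inner_smul_right]
      rw [real_inner_comm (d₁ s) (t s)]
      ring
  have hFc : ContinuousOn (mfF t d₁ d₂) (Set.Icc 0 L) := fun s hs => (hF' s hs).continuousWithinAt
  -- a uniform bound on the coefficients
  obtain ⟨C₁, hC₁⟩ := (isCompact_Icc).exists_bound_of_continuousOn hu₁
  obtain ⟨C₂, hC₂⟩ := (isCompact_Icc).exists_bound_of_continuousOn hu₂
  obtain ⟨C₃, hC₃⟩ := (isCompact_Icc).exists_bound_of_continuousOn hu₃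
  set U := max (max C₁ C₂) C₃ with hUdef
  have hu₁U : ∀ s ∈ Set.Icc (0:ℝ) L, |u₁ s| ≤ U := fun s hs =>
    le_trans (hC₁ s hs) (le_trans (le_max_left _ _) (le_max_left _ _))
  have hu₂U : ∀ s ∈ Set.Icc (0:ℝ) L, |u₂ s| ≤ U := fun s hs =>
    le_trans (hC₂ s hs) (le_trans (le_max_right _ _) (le_max_left _ _))
  have hu₃U : ∀ s ∈ Set.Icc (0:ℝ) L, |u₃ s| ≤ U := fun s hs =>
    le_trans (hC₃ s hs) (le_max_right _ _)
  -- (mfF t d₁ d₂) vanishes at 0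
  have hF0 : (mfF t d₁ d₂) 0 = 0 := by
    rw [orthonormal_iff_ite] at h0
    have e00 : ⟪t 0, t 0⟫ = 1 := by have := h0 0 0; rwa [if_pos rfl] at this
    have e11 : ⟪d₁ 0, d₁ 0⟫ = 1 := by have := h0 1 1; rwa [if_pos rfl] at this
    have e22 : ⟪d₂ 0, d₂ 0⟫ = 1 := by have := h0 2 2; rwa [if_pos rfl] at this
    have e01 : ⟪t 0, d₁ 0⟫ = 0 := by have := h0 0 1; rwa [if_neg (by decide)] at this
    have e02 : ⟪t 0, d₂ 0⟫ = 0 := by have := h0 0 2; rwa [if_neg (by decide)] at this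
    have e12 : ⟪d₁ 0, d₂ 0⟫ = 0 := by have := h0 1 2; rwa [if_neg (by decide)] at this
    funext i
    fin_cases i
    · show ⟪t 0, t 0⟫ - 1 = 0; rw [e00]; ring
    · show ⟪d₁ 0, d₁ 0⟫ - 1 = 0; rw [e11]; ring
    · show ⟪d₂ 0, d₂ 0⟫ - 1 = 0; rw [e22]; ring
    · exact e01
    · exact e02
    · exact e12
  -- Grönwall
  have key : ∀ s ∈ Set.Icc (0:ℝ) L, (mfF t d₁ d₂) s = 0 := by
    have main := norm_le_gronwallBound_of_norm_deriv_right_le (δ := 0) (K := 4 * U) (ε := 0)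
      hFc
      (fun x hx => by
        refine (hF' x (Set.mem_Icc_of_Ico hx)).mono_of_mem_nhdsWithin ?_
        exact Icc_mem_nhdsGE_of_mem hx)
      (by simp [hF0])
      (fun x hx => by
        have hxI : x ∈ Set.Icc (0:ℝ) L := Set.mem_Icc_of_Ico hx
        have h1 := hu₁U x hxI
        have h2 := hu₂U x hxI
        have h3 := hu₃U x hxI
        have hneg : ∀ v : ℝ, |v| ≤ U → |(-v)| ≤ U := fun v hv => by rwa [abs_neg]
        have hn0 : |⟪t x, t x⟫ - 1| ≤ ‖(mfF t d₁ d₂) x‖ := by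
          have := norm_le_pi_norm ((mfF t d₁ d₂) x) 0
          rwa [show (mfF t d₁ d₂) x 0 = ⟪t x, t x⟫ - 1 from rfl, Real.norm_eq_abs] at this
        have hn1 : |⟪d₁ x, d₁ x⟫ - 1| ≤ ‖(mfF t d₁ d₂) x‖ := by
          have := norm_le_pi_norm ((mfF t d₁ d₂) x) 1
          rwa [show (mfF t d₁ d₂) x 1 = ⟪d₁ x, d₁ x⟫ - 1 from rfl, Real.norm_eq_abs] at this
        have hn2 : |⟪d₂ x, d₂ x⟫ - 1| ≤ ‖(mfF t d₁ d₂) x‖ := by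
          have := norm_le_pi_norm ((mfF t d₁ d₂) x) 2
          rwa [show (mfF t d₁ d₂) x 2 = ⟪d₂ x, d₂ x⟫ - 1 from rfl, Real.norm_eq_abs] at this
        have hn3 : |⟪t x, d₁ x⟫| ≤ ‖(mfF t d₁ d₂) x‖ := by
          have := norm_le_pi_norm ((mfF t d₁ d₂) x) 3
          rwa [show (mfF t d₁ d₂) x 3 = ⟪t x, d₁ x⟫ from rfl, Real.norm_eq_abs] at this
        have hn4 : |⟪t x, d₂ x⟫| ≤ ‖(mfF t d₁ d₂) x‖ := by
          have := norm_le_pi_norm ((mfF t d₁ d₂) x) 4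
          rwa [show (mfF t d₁ d₂) x 4 = ⟪t x, d₂ x⟫ from rfl, Real.norm_eq_abs] at this
        have hn5 : |⟪d₁ x, d₂ x⟫| ≤ ‖(mfF t d₁ d₂) x‖ := by
          have := norm_le_pi_norm ((mfF t d₁ d₂) x) 5
          rwa [show (mfF t d₁ d₂) x 5 = ⟪d₁ x, d₂ x⟫ from rfl, Real.norm_eq_abs] at this
        have hKnn : (0:ℝ) ≤ 4 * U * ‖(mfF t d₁ d₂) x‖ :=
          mul_nonneg (mul_nonneg (by norm_num) (le_trans (abs_nonneg _) h1)) (norm_nonneg _)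
        rw [add_zero, show (4 * U) * ‖(mfF t d₁ d₂) x‖ = 4 * U * ‖(mfF t d₁ d₂) x‖ from rfl]
        refine (pi_norm_le_iff_of_nonneg hKnn).2 fun i => ?_
        fin_cases i
        · show |2 * u₂ x * ⟪t x, d₁ x⟫ - 2 * u₁ x * ⟪t x, d₂ x⟫| ≤ 4 * U * ‖mfF t d₁ d₂ x‖
          rw [show (2 * u₂ x * ⟪t x, d₁ x⟫ - 2 * u₁ x * ⟪t x, d₂ x⟫) = u₂ x * ⟪t x, d₁ x⟫ + u₂ x * ⟪t x, d₁ x⟫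
              + (-u₁ x) * ⟪t x, d₂ x⟫ + (-u₁ x) * ⟪t x, d₂ x⟫ by ring]
          exact four_term_bound _ _ _ _ _ _ _ _ _ _ h2 h2 (hneg _ h1) (hneg _ h1) hn3 hn3 hn4 hn4
        · show |-(2 * u₂ x * ⟪t x, d₁ x⟫) + 2 * u₃ x * ⟪d₁ x, d₂ x⟫| ≤ 4 * U * ‖mfF t d₁ d₂ x‖
          rw [show (-(2 * u₂ x * ⟪t x, d₁ x⟫) + 2 * u₃ x * ⟪d₁ x, d₂ x⟫) = (-u₂ x) * ⟪t x, d₁ x⟫ + (-u₂ x) * ⟪t x, d₁ x⟫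
              + u₃ x * ⟪d₁ x, d₂ x⟫ + u₃ x * ⟪d₁ x, d₂ x⟫ by ring]
          exact four_term_bound _ _ _ _ _ _ _ _ _ _ (hneg _ h2) (hneg _ h2) h3 h3 hn3 hn3 hn5 hn5
        · show |2 * u₁ x * ⟪t x, d₂ x⟫ - 2 * u₃ x * ⟪d₁ x, d₂ x⟫| ≤ 4 * U * ‖mfF t d₁ d₂ x‖
          rw [show (2 * u₁ x * ⟪t x, d₂ x⟫ - 2 * u₃ x * ⟪d₁ x, d₂ x⟫) = u₁ x * ⟪t x, d₂ x⟫ + u₁ x * ⟪t x, d₂ x⟫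
              + (-u₃ x) * ⟪d₁ x, d₂ x⟫ + (-u₃ x) * ⟪d₁ x, d₂ x⟫ by ring]
          exact four_term_bound _ _ _ _ _ _ _ _ _ _ h1 h1 (hneg _ h3) (hneg _ h3) hn4 hn4 hn5 hn5
        · show |u₂ x * (⟪d₁ x, d₁ x⟫ - 1) - u₂ x * (⟪t x, t x⟫ - 1)
              - u₁ x * ⟪d₁ x, d₂ x⟫ + u₃ x * ⟪t x, d₂ x⟫| ≤ 4 * U * ‖mfF t d₁ d₂ x‖
          rw [show (u₂ x * (⟪d₁ x, d₁ x⟫ - 1) - u₂ x * (⟪t x, t x⟫ - 1)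
              - u₁ x * ⟪d₁ x, d₂ x⟫ + u₃ x * ⟪t x, d₂ x⟫) = u₂ x * (⟪d₁ x, d₁ x⟫ - 1) + (-u₂ x) * (⟪t x, t x⟫ - 1)
              + (-u₁ x) * ⟪d₁ x, d₂ x⟫ + u₃ x * ⟪t x, d₂ x⟫ by ring]
          exact four_term_bound _ _ _ _ _ _ _ _ _ _ h2 (hneg _ h2) (hneg _ h1) h3 hn1 hn0 hn5 hn4
        · show |u₁ x * (⟪t x, t x⟫ - 1) - u₁ x * (⟪d₂ x, d₂ x⟫ - 1)
              + u₂ x * ⟪d₁ x, d₂ x⟫ - u₃ x * ⟪t x, d₁ x⟫| ≤ 4 * U * ‖mfF t d₁ d₂ x‖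
          rw [show (u₁ x * (⟪t x, t x⟫ - 1) - u₁ x * (⟪d₂ x, d₂ x⟫ - 1)
              + u₂ x * ⟪d₁ x, d₂ x⟫ - u₃ x * ⟪t x, d₁ x⟫) = u₁ x * (⟪t x, t x⟫ - 1) + (-u₁ x) * (⟪d₂ x, d₂ x⟫ - 1)
              + u₂ x * ⟪d₁ x, d₂ x⟫ + (-u₃ x) * ⟪t x, d₁ x⟫ by ring]
          exact four_term_bound _ _ _ _ _ _ _ _ _ _ h1 (hneg _ h1) h2 (hneg _ h3) hn0 hn2 hn5 hn3
        · show |u₃ x * (⟪d₂ x, d₂ x⟫ - 1) - u₃ x * (⟪d₁ x, d₁ x⟫ - 1)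
              + u₁ x * ⟪t x, d₁ x⟫ - u₂ x * ⟪t x, d₂ x⟫| ≤ 4 * U * ‖mfF t d₁ d₂ x‖
          rw [show (u₃ x * (⟪d₂ x, d₂ x⟫ - 1) - u₃ x * (⟪d₁ x, d₁ x⟫ - 1)
              + u₁ x * ⟪t x, d₁ x⟫ - u₂ x * ⟪t x, d₂ x⟫) = u₃ x * (⟪d₂ x, d₂ x⟫ - 1) + (-u₃ x) * (⟪d₁ x, d₁ x⟫ - 1)
              + u₁ x * ⟪t x, d₁ x⟫ + (-u₂ x) * ⟪t x, d₂ x⟫ by ring]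
          exact four_term_bound _ _ _ _ _ _ _ _ _ _ h3 (hneg _ h3) h1 (hneg _ h2) hn2 hn1 hn3 hn4)
    intro s hs
    have := main s hs
    rw [gronwallBound_ε0_δ0] at this
    exact norm_le_zero_iff.mp this
  -- conclude orthonormality
  intro s hs
  have hFs := key s hs
  have e0 : ⟪t s, t s⟫ - 1 = 0 := by
    have := congrFun hFs 0; rwa [show (mfF t d₁ d₂) s 0 = ⟪t s, t s⟫ - 1 from rfl] at this
  have e1 : ⟪d₁ s, d₁ s⟫ - 1 = 0 := by
    have := congrFun hFs 1; rwa [show (mfF t d₁ d₂) s 1 = ⟪d₁ s, d₁ s⟫ - 1 from rfl] at this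
  have e2 : ⟪d₂ s, d₂ s⟫ - 1 = 0 := by
    have := congrFun hFs 2; rwa [show (mfF t d₁ d₂) s 2 = ⟪d₂ s, d₂ s⟫ - 1 from rfl] at this
  have e3 : ⟪t s, d₁ s⟫ = 0 := by
    have := congrFun hFs 3; rwa [show (mfF t d₁ d₂) s 3 = ⟪t s, d₁ s⟫ from rfl] at this
  have e4 : ⟪t s, d₂ s⟫ = 0 := by
    have := congrFun hFs 4; rwa [show (mfF t d₁ d₂) s 4 = ⟪t s, d₂ s⟫ from rfl] at this
  have e5 : ⟪d₁ s, d₂ s⟫ = 0 := by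
    have := congrFun hFs 5; rwa [show (mfF t d₁ d₂) s 5 = ⟪d₁ s, d₂ s⟫ from rfl] at this
  rw [orthonormal_iff_ite]
  intro i j
  have ett : ⟪t s, t s⟫ = 1 := by linarith
  have e11' : ⟪d₁ s, d₁ s⟫ = 1 := by linarith
  have e22' : ⟪d₂ s, d₂ s⟫ = 1 := by linarith
  fin_cases i <;> fin_cases j
  · rw [if_pos rfl]; exact ett
  · rw [if_neg (by decide)]; exact e3
  · rw [if_neg (by decide)]; exact e4
  · rw [if_neg (by decide)]; exact real_inner_comm (t s) (d₁ s) ▸ e3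
  · rw [if_pos rfl]; exact e11'
  · rw [if_neg (by decide)]; exact e5
  · rw [if_neg (by decide)]; exact real_inner_comm (t s) (d₂ s) ▸ e4
  · rw [if_neg (by decide)]; exact real_inner_comm (d₁ s) (d₂ s) ▸ e5
  · rw [if_pos rfl]; exact e22'
end
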